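/- If the data is of Heisenberg type, then the Folland–Kaplan gauge N is ∞-harmonic away from the origin: for every g = (z,t) ≠ (0,0), 𝓛_∞ N(g) = Σ_{i,j} N_{,eᵢeⱼ}(g) X_{eᵢ}N(g) X_{eⱼ}N(g) = 0. -/
import Mathlib


open scoped RealInnerProductSpace
open MeasureTheory

noncomputable section

variable {V₁ V₂ : Type*} [NormedAddCommGroup V₁] [InnerProductSpace ℝ V₁]
  [NormedAddCommGroup V₂] [InnerProductSpace ℝ V₂]

/-- The horizontal derivative of `f : V₁ × V₂ → ℝ` at `g = (z,t)` in the horizontal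
direction `v ∈ V₁`, namely `Df(g)(v, ½[z,v])`. -/
def Xd (b : V₁ →ₗ[ℝ] V₁ →ₗ[ℝ] V₂) (v : V₁) (f : V₁ × V₂ → ℝ) (g : V₁ × V₂) : ℝ :=
  fderiv ℝ f g (v, (2⁻¹ : ℝ) • b g.1 v)

/-- The horizontal gradient: the unique vector of `V₁` representing the linear functional
`v ↦ X_v f (g)` via the inner product of `V₁`. -/
def Xgrad [FiniteDimensional ℝ V₁] [FiniteDimensional ℝ V₂]
    (b : V₁ →ₗ[ℝ] V₁ →ₗ[ℝ] V₂) (f : V₁ × V₂ → ℝ) (g : V₁ × V₂) : V₁ :=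
  (InnerProductSpace.toDual ℝ V₁).symm
    (LinearMap.toContinuousLinearMap
      ((fderiv ℝ f g).toLinearMap.comp
        (LinearMap.prod LinearMap.id ((2⁻¹ : ℝ) • b g.1))))

/-- The symmetrized second horizontal derivative `f_{,uv} = ½(X_u X_v f + X_v X_u f)`. -/
def X2sym (b : V₁ →ₗ[ℝ] V₁ →ₗ[ℝ] V₂) (u v : V₁) (f : V₁ × V₂ → ℝ) (g : V₁ × V₂) : ℝ :=
  (Xd b u (Xd b v f) g + Xd b v (Xd b u f) g) / 2

/-- The horizontal (sub-)Laplacian `𝓛 f = Σᵢ X_{eᵢ} X_{eᵢ} f`. -/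
def hLap [FiniteDimensional ℝ V₁] (b : V₁ →ₗ[ℝ] V₁ →ₗ[ℝ] V₂) (f : V₁ × V₂ → ℝ)
    (g : V₁ × V₂) : ℝ :=
  ∑ i, Xd b (stdOrthonormalBasis ℝ V₁ i) (Xd b (stdOrthonormalBasis ℝ V₁ i) f) g

/-- The horizontal ∞-Laplacian `𝓛_∞ f = Σ_{i,j} f_{,eᵢeⱼ} X_{eᵢ}f X_{eⱼ}f`. -/
def hInfLap [FiniteDimensional ℝ V₁] (b : V₁ →ₗ[ℝ] V₁ →ₗ[ℝ] V₂) (f : V₁ × V₂ → ℝ)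
    (g : V₁ × V₂) : ℝ :=
  ∑ i, ∑ j, X2sym b (stdOrthonormalBasis ℝ V₁ i) (stdOrthonormalBasis ℝ V₁ j) f g *
    Xd b (stdOrthonormalBasis ℝ V₁ i) f g * Xd b (stdOrthonormalBasis ℝ V₁ j) f g

/-- `ψ(z,t) = |z|²`. -/
def psiF (g : V₁ × V₂) : ℝ := ‖g.1‖ ^ 2

/-- `χ(z,t) = |t|²`. -/
def chiF (g : V₁ × V₂) : ℝ := ‖g.2‖ ^ 2

/-- `a(z,t) = ψ² + 16χ = |z|⁴ + 16|t|²`. -/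
def aF (g : V₁ × V₂) : ℝ := psiF g ^ 2 + 16 * chiF g

/-- The Folland–Kaplan gauge `N = a^{1/4}`. -/
def Ng (g : V₁ × V₂) : ℝ := aF g ^ ((1 : ℝ) / 4)

/-- `A(z,t) = |z|² z + 4 J(t) z`. -/
def Ag (J : V₂ → V₁ →ₗ[ℝ] V₁) (g : V₁ × V₂) : V₁ :=
  ‖g.1‖ ^ 2 • g.1 + (4 : ℝ) • J g.2 g.1

/-- The group law `(z,t)·(z',t') = (z+z', t+t'+½[z,z'])`. -/
def gmul (b : V₁ →ₗ[ℝ] V₁ →ₗ[ℝ] V₂) (g h : V₁ × V₂) : V₁ × V₂ :=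
  (g.1 + h.1, g.2 + h.2 + (2⁻¹ : ℝ) • b g.1 h.1)

/-- The group inverse `(z,t)⁻¹ = (−z,−t)`. -/
def ginv (g : V₁ × V₂) : V₁ × V₂ := (-g.1, -g.2)

end

noncomputable section

variable {V₁ V₂ : Type*} [NormedAddCommGroup V₁] [InnerProductSpace ℝ V₁]
  [NormedAddCommGroup V₂] [InnerProductSpace ℝ V₂]

set_option linter.unusedSectionVars false

section Aux

variable [FiniteDimensional ℝ V₁] [FiniteDimensional ℝ V₂]

def Gf (b : V₁ →ₗ[ℝ] V₁ →ₗ[ℝ] V₂) (v : V₁) (g : V₁ × V₂) : ℝ :=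
  ⟪g.1, g.1⟫ * ⟪g.1, v⟫ + 4 * ⟪b g.1 v, g.2⟫

def Ff (b : V₁ →ₗ[ℝ] V₁ →ₗ[ℝ] V₂) (v : V₁) (g : V₁ × V₂) : ℝ :=
  aF g ^ (-(3:ℝ)/4) * Gf b v g

lemma aF_eq (g : V₁ × V₂) : aF g = ⟪g.1, g.1⟫ * ⟪g.1, g.1⟫ + 16 * ⟪g.2, g.2⟫ := by
  simp only [aF, psiF, chiF, ← real_inner_self_eq_norm_sq]; ring

lemma aF_pos (g : V₁ × V₂) (hg : g ≠ (0, 0)) : 0 < aF g := by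
  rcases g with ⟨z, t⟩
  simp only [aF, psiF, chiF]
  rcases eq_or_ne z 0 with rfl | hz
  · have ht : t ≠ 0 := by
      intro h; exact hg (by simp [h])
    have h1 : 0 < ‖t‖ := norm_pos_iff.mpr ht
    nlinarith [sq_nonneg (‖(0 : V₁)‖ ^ 2)]
  · have h1 : 0 < ‖z‖ := norm_pos_iff.mpr hz
    nlinarith [sq_nonneg (‖t‖), pow_pos h1 2]

lemma Xd_Ng (b : V₁ →ₗ[ℝ] V₁ →ₗ[ℝ] V₂) (v : V₁) (g : V₁ × V₂) (hg : g ≠ (0, 0)) :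
    Xd b v Ng g = Ff b v g := by
  have ha := aF_pos g hg
  have hf : HasFDerivAt (Prod.fst : V₁ × V₂ → V₁) (ContinuousLinearMap.fst ℝ V₁ V₂) g :=
    hasFDerivAt_fst
  have hs : HasFDerivAt (Prod.snd : V₁ × V₂ → V₂) (ContinuousLinearMap.snd ℝ V₁ V₂) g :=
    hasFDerivAt_snd
  have h1 := hf.inner ℝ hf
  have h2 := hs.inner ℝ hs
  have haF := ((h1.mul h1).add (h2.const_mul 16)).congr_of_eventuallyEq
    (Filter.EventuallyEq.of_eq (funext aF_eq))
  have hN := haF.rpow_const (p := (1:ℝ)/4) (Or.inl ha.ne')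
  have hNg : Ng = fun x : V₁ × V₂ => aF x ^ ((1:ℝ)/4) := rfl
  rw [Xd, hNg, hN.fderiv]
  simp only [ContinuousLinearMap.coe_smul', Pi.smul_apply, ContinuousLinearMap.add_apply,
    ContinuousLinearMap.coe_comp', Function.comp_apply, ContinuousLinearMap.prod_apply,
    fderivInnerCLM_apply, ContinuousLinearMap.coe_fst', ContinuousLinearMap.coe_snd',
    ContinuousLinearMap.smul_apply, smul_eq_mul, real_inner_smul_right, real_inner_smul_left,
    Ff, Gf]
  have hE : (1:ℝ)/4 - 1 = -(3:ℝ)/4 := by norm_num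
  rw [hE, real_inner_comm g.2 (b g.1 v), real_inner_comm g.1 v]
  ring

set_option linter.unusedSectionVars false

lemma Xd_Ff (b : V₁ →ₗ[ℝ] V₁ →ₗ[ℝ] V₂) (u v : V₁) (g : V₁ × V₂) (hg : g ≠ (0, 0)) :
    Xd b u (Ff b v) g = -3 * aF g ^ (-(7:ℝ)/4) * Gf b u g * Gf b v g
      + aF g ^ (-(3:ℝ)/4) * (2 * ⟪g.1, u⟫ * ⟪g.1, v⟫ + ⟪g.1, g.1⟫ * ⟪u, v⟫
        + 4 * ⟪b u v, g.2⟫ + 2 * ⟪b g.1 v, b g.1 u⟫) := by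
  have ha := aF_pos g hg
  have hf : HasFDerivAt (Prod.fst : V₁ × V₂ → V₁) (ContinuousLinearMap.fst ℝ V₁ V₂) g :=
    hasFDerivAt_fst
  have hs : HasFDerivAt (Prod.snd : V₁ × V₂ → V₂) (ContinuousLinearMap.snd ℝ V₁ V₂) g :=
    hasFDerivAt_snd
  have h1 := hf.inner ℝ hf
  have h2 := hs.inner ℝ hs
  have haF := ((h1.mul h1).add (h2.const_mul 16)).congr_of_eventuallyEq
    (Filter.EventuallyEq.of_eq (funext aF_eq))
  have hrp := haF.rpow_const (p := -(3:ℝ)/4) (Or.inl ha.ne')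
  have hzv := hf.inner ℝ (hasFDerivAt_const v g)
  have hBv : HasFDerivAt (fun g : V₁ × V₂ => b g.1 v)
      (LinearMap.toContinuousLinearMap ((b.flip v).comp (LinearMap.fst ℝ V₁ V₂))) g :=
    (LinearMap.toContinuousLinearMap ((b.flip v).comp (LinearMap.fst ℝ V₁ V₂))).hasFDerivAt
  have hbv := hBv.inner ℝ hs
  have hGf : HasFDerivAt (Gf b v) _ g := (h1.mul hzv).add (hbv.const_mul 4)
  have hFf : HasFDerivAt (Ff b v) _ g := hrp.mul hGf
  rw [Xd, hFf.fderiv]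
  simp only [ContinuousLinearMap.coe_smul', Pi.smul_apply, ContinuousLinearMap.add_apply,
    ContinuousLinearMap.coe_comp', Function.comp_apply, ContinuousLinearMap.prod_apply,
    fderivInnerCLM_apply, ContinuousLinearMap.coe_fst', ContinuousLinearMap.coe_snd',
    ContinuousLinearMap.smul_apply, smul_eq_mul, real_inner_smul_right, real_inner_smul_left,
    LinearMap.coe_toContinuousLinearMap', LinearMap.coe_comp, LinearMap.flip_apply,
    LinearMap.fst_apply, Ff, Gf]
  have hE : -(3:ℝ)/4 - 1 = -(7:ℝ)/4 := by norm_num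
  rw [hE]
  simp only [ContinuousLinearMap.zero_apply, inner_zero_right,
    real_inner_comm u g.1, real_inner_comm (b g.1 v) g.2, real_inner_comm (b g.1 u) g.2]
  ring

lemma X2_Ng (b : V₁ →ₗ[ℝ] V₁ →ₗ[ℝ] V₂) (u v : V₁) (g : V₁ × V₂) (hg : g ≠ (0, 0)) :
    Xd b u (Xd b v Ng) g = -3 * aF g ^ (-(7:ℝ)/4) * Gf b u g * Gf b v g
      + aF g ^ (-(3:ℝ)/4) * (2 * ⟪g.1, u⟫ * ⟪g.1, v⟫ + ⟪g.1, g.1⟫ * ⟪u, v⟫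
        + 4 * ⟪b u v, g.2⟫ + 2 * ⟪b g.1 v, b g.1 u⟫) := by
  have hev : Xd b v Ng =ᶠ[nhds g] Ff b v := by
    filter_upwards [IsOpen.mem_nhds isOpen_ne hg] with h hh
    exact Xd_Ng b v h hh
  rw [Xd, hev.fderiv_eq]
  exact Xd_Ff b u v g hg

lemma X2sym_Ng (b : V₁ →ₗ[ℝ] V₁ →ₗ[ℝ] V₂) (hskew : ∀ z z' : V₁, b z z' = - b z' z)
    (u v : V₁) (g : V₁ × V₂) (hg : g ≠ (0, 0)) :
    (Xd b u (Xd b v Ng) g + Xd b v (Xd b u Ng) g) / 2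
      = -3 * aF g ^ (-(7:ℝ)/4) * Gf b u g * Gf b v g
      + aF g ^ (-(3:ℝ)/4) * (2 * ⟪g.1, u⟫ * ⟪g.1, v⟫ + ⟪g.1, g.1⟫ * ⟪u, v⟫
        + 2 * ⟪b g.1 v, b g.1 u⟫) := by
  rw [X2_Ng b u v g hg, X2_Ng b v u g hg, hskew v u]
  simp only [inner_neg_left, real_inner_comm v u, real_inner_comm (b g.1 u) (b g.1 v)]
  ring

end Aux

end

theorem riesz_htype_N_infinity_harmonic {V₁ V₂ : Type*} [NormedAddCommGroup V₁] [InnerProductSpace ℝ V₁]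
    [FiniteDimensional ℝ V₁] [NormedAddCommGroup V₂] [InnerProductSpace ℝ V₂]
    [FiniteDimensional ℝ V₂] (m k : ℕ) (hm : 1 ≤ m) (hk : 1 ≤ k)
    (hdV₁ : Module.finrank ℝ V₁ = m) (hdV₂ : Module.finrank ℝ V₂ = k)
    (b : V₁ →ₗ[ℝ] V₁ →ₗ[ℝ] V₂) (hskew : ∀ z z' : V₁, b z z' = - b z' z)
    (J : V₂ → V₁ →ₗ[ℝ] V₁) (hJ : ∀ (t : V₂) (z z' : V₁), ⟪J t z, z'⟫ = ⟪b z z', t⟫) (hH : ∀ (t : V₂) (z : V₁), ‖J t z‖ = ‖t‖ * ‖z‖) :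
    ∀ g : V₁ × V₂, g ≠ (0, 0) → hInfLap b Ng g = 0 := by
  intro g hg
  have ha := aF_pos g hg
  set e := stdOrthonormalBasis ℝ V₁ with he
  set S := aF g ^ (-(3:ℝ)/4) with hSdef
  set T := aF g ^ (-(7:ℝ)/4) with hTdef
  set z := g.1 with hz0
  set t := g.2 with ht0
  -- basic algebraic identities
  have hbzz : b z z = 0 := by
    have h := hskew z z
    have h2 : (2:ℝ) • b z z = 0 := by
      rw [two_smul]; nth_rewrite 2 [h]; simp
    rcases smul_eq_zero.mp h2 with h3 | h3
    · norm_num at h3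
    · exact h3
  have hzJ : ∀ s : V₂, ⟪z, J s z⟫ = 0 := by
    intro s
    rw [real_inner_comm, hJ, hbzz, inner_zero_left]
  have hzJ' : ∀ s : V₂, ⟪J s z, z⟫ = 0 := by
    intro s
    rw [hJ, hbzz, inner_zero_left]
  have hJadd : ∀ s s' : V₂, ∀ w : V₁, J (s + s') w = J s w + J s' w := by
    intro s s' w
    apply ext_inner_right ℝ
    intro x
    rw [inner_add_left, hJ, hJ, hJ, inner_add_right]
  have hpol : ∀ s s' : V₂, ∀ w : V₁, ⟪J s w, J s' w⟫ = ⟪s, s'⟫ * ⟪w, w⟫ := by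
    intro s s' w
    have e1 := norm_add_sq_real (J s w) (J s' w)
    have e2 := norm_add_sq_real s s'
    have e3 : ‖J s w + J s' w‖ = ‖s + s'‖ * ‖w‖ := by rw [← hJadd, hH]
    have e4 : ‖J s w + J s' w‖ ^ 2 = (‖s + s'‖ * ‖w‖) ^ 2 := by rw [e3]
    have e5 : ‖J s w‖ ^ 2 = (‖s‖ * ‖w‖) ^ 2 := by rw [hH]
    have e6 : ‖J s' w‖ ^ 2 = (‖s'‖ * ‖w‖) ^ 2 := by rw [hH]
    have e7 : ⟪w, w⟫ = ‖w‖ ^ 2 := real_inner_self_eq_norm_sq w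
    rw [e7]
    nlinarith [e1, e2, e4, e5, e6]
  have hbJ : ∀ s : V₂, b z (J s z) = ⟪z, z⟫ • s := by
    intro s
    apply ext_inner_right ℝ
    intro x
    rw [← hJ, hpol, real_inner_smul_left, real_inner_comm x s]
    ring
  -- the horizontal gradient direction
  set A : V₁ := ⟪z, z⟫ • z + (4:ℝ) • J t z with hAdef
  have hGA : ∀ v : V₁, Gf b v g = ⟪A, v⟫ := by
    intro v
    simp only [Gf, hAdef, inner_add_left, real_inner_smul_left, ← hz0, ← ht0]
    rw [hJ t z v]
  have hzA : ⟪z, A⟫ = ⟪z, z⟫ * ⟪z, z⟫ := by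
    simp only [hAdef, inner_add_right, real_inner_smul_right, hzJ]
    ring
  have hJJ : ⟪J t z, J t z⟫ = ⟪t, t⟫ * ⟪z, z⟫ := hpol t t z
  have htb : ∀ x : V₁, ⟪t, b z x⟫ = ⟪J t z, x⟫ := by
    intro x
    rw [real_inner_comm, hJ]
  have hJtA : ⟪J t z, A⟫ = 4 * (⟪t, t⟫ * ⟪z, z⟫) := by
    simp only [hAdef, inner_add_right, real_inner_smul_right, hJJ, hzJ']
    ring
  have hAA : ⟪A, A⟫ = ⟪z, z⟫ * aF g := by
    simp only [hAdef, inner_add_left, real_inner_smul_left, inner_add_right,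
      real_inner_smul_right, hzJ, hzJ', hJJ]
    rw [aF_eq]
    ring
  have hbA : b z A = (4 * ⟪z, z⟫) • t := by
    simp only [hAdef, map_add, _root_.map_smul, hbzz, hbJ, smul_zero, zero_add, smul_smul]
  have hwA : ∀ i, ⟪J (b z (e i)) z, A⟫ = 4 * ⟪z, z⟫ * ⟪J t z, e i⟫ := by
    intro i
    rw [hJ, hbA, real_inner_smul_left, htb]
  have hs1 : ∀ x y : V₁, ∑ j, ⟪x, e j⟫ * ⟪y, e j⟫ = ⟪x, y⟫ := by
    intro x y
    have h := (stdOrthonormalBasis ℝ V₁).sum_inner_mul_inner x y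
    rw [← he] at h
    rw [← h]
    exact Finset.sum_congr rfl fun j _ => by rw [real_inner_comm (e j) y]
  have hX1 : ∀ v : V₁, Xd b v Ng g = S * ⟪A, v⟫ := by
    intro v
    rw [Xd_Ng b v g hg, Ff, hGA]
  have hX2 : ∀ u v : V₁, X2sym b u v Ng g = -3 * T * ⟪A, u⟫ * ⟪A, v⟫
      + S * (2 * ⟪z, u⟫ * ⟪z, v⟫ + ⟪z, z⟫ * ⟪u, v⟫ + 2 * ⟪b z v, b z u⟫) := by
    intro u v
    rw [X2sym, X2sym_Ng b hskew u v g hg, hGA, hGA]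
  have hterm : ∀ i j, X2sym b (e i) (e j) Ng g * Xd b (e i) Ng g * Xd b (e j) Ng g =
      (-3 * T * S^2 * (⟪A, e i⟫ * ⟪A, e i⟫)) * (⟪A, e j⟫ * ⟪A, e j⟫)
      + ((2 * S^3 * (⟪z, e i⟫ * ⟪A, e i⟫)) * (⟪z, e j⟫ * ⟪A, e j⟫)
      + ((S^3 * ⟪z, z⟫ * ⟪A, e i⟫) * (⟪e i, e j⟫ * ⟪A, e j⟫)
      + (2 * S^3 * ⟪A, e i⟫) * (⟪J (b z (e i)) z, e j⟫ * ⟪A, e j⟫))) := by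
    intro i j
    rw [hX2, hX1, hX1, hJ (b z (e i)) z (e j)]
    ring
  rw [hInfLap]
  trans ∑ i, ((-3 * T * S^2 * (⟪z, z⟫ * aF g) + S^3 * ⟪z, z⟫) * (⟪A, e i⟫ * ⟪A, e i⟫)
      + ((2 * S^3 * (⟪z, z⟫ * ⟪z, z⟫)) * (⟪z, e i⟫ * ⟪A, e i⟫)
      + (8 * S^3 * ⟪z, z⟫) * (⟪J t z, e i⟫ * ⟪A, e i⟫)))
  · refine Finset.sum_congr rfl fun i _ => ?_
    rw [Finset.sum_congr rfl fun j _ => hterm i j]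
    simp only [Finset.sum_add_distrib, ← Finset.mul_sum, hs1]
    rw [hAA, hzA, hwA i, real_inner_comm (e i) A]
    ring
  simp only [Finset.sum_add_distrib, ← Finset.mul_sum, hs1]
  rw [hAA, hzA, hJtA]
  have haf : aF g = ⟪z, z⟫ * ⟪z, z⟫ + 16 * ⟪t, t⟫ := aF_eq g
  have hTS : S = T * aF g := by
    rw [hSdef, hTdef, ← Real.rpow_add_one ha.ne']
    norm_num
  linear_combination (-2 * S^3 * ⟪z, z⟫ * ⟪z, z⟫) * haf + (3 * S^2 * ⟪z, z⟫ * ⟪z, z⟫ * aF g) * hTS
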